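/- For the resonant trapping-state reservoir on the (n̄+1)-dimensional truncation: for every density matrix ρ₀ ∈ Matrix (Fin (n̄+1)) (Fin (n̄+1)) ℂ, the iterates ρ_k = Φ_r^[k](ρ₀) converge entrywise, as k → ∞, to the projector |n̄⟩⟨n̄|. -/

import Mathlib

open Matrix
open scoped ComplexOrder

noncomputable section

/-- α(n) = π·√((n+1)/(n̄+1)) -/
def alphaAng (nbar n : ℕ) : ℝ := Real.pi * Real.sqrt (((n : ℝ) + 1) / ((nbar : ℝ) + 1))

/-- Kraus operator M_g^r of the resonant trapping-state reservoir on dimension D. -/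
def Mgr (nbar D : ℕ) : Matrix (Fin D) (Fin D) ℂ :=
  fun i j => if (i : ℕ) = (j : ℕ) + 1
    then Complex.ofReal (Real.sin (alphaAng nbar (j : ℕ)))
    else 0

/-- Kraus operator M_e^r of the resonant trapping-state reservoir on dimension D. -/
def Mer (nbar D : ℕ) : Matrix (Fin D) (Fin D) ℂ :=
  fun i j => if i = j then Complex.ofReal (Real.cos (alphaAng nbar (j : ℕ))) else 0

/-- Kraus map of the resonant trapping-state reservoir on dimension D. -/
def PhirK (nbar D : ℕ) (ρ : Matrix (Fin D) (Fin D) ℂ) : Matrix (Fin D) (Fin D) ℂ :=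
  Mgr nbar D * ρ * (Mgr nbar D)ᴴ + Mer nbar D * ρ * (Mer nbar D)ᴴ

-- helper: sum over shifted delta
lemma sum_shift {D : ℕ} (j : Fin D) (c : Fin D → ℂ) :
    ∑ l : Fin D, (if (j:ℕ) = (l:ℕ)+1 then c l else 0) =
      if h : 1 ≤ (j:ℕ) then c ⟨(j:ℕ)-1, by omega⟩ else 0 := by
  split
  · rename_i h
    rw [Finset.sum_eq_single (⟨(j:ℕ)-1, by omega⟩ : Fin D)]
    · rw [if_pos]; simp; omega
    · intro b _ hb
      rw [if_neg]
      intro hc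
      apply hb
      apply Fin.ext
      simp
      omega
    · simp
  · rename_i h
    apply Finset.sum_eq_zero
    intro l _
    rw [if_neg]
    omega

lemma Mg_entry (nbar : ℕ) (ρ : Matrix (Fin (nbar+1)) (Fin (nbar+1)) ℂ) (i j : Fin (nbar+1)) :
    (Mgr nbar (nbar+1) * ρ * (Mgr nbar (nbar+1))ᴴ) i j =
      if h : 1 ≤ (i:ℕ) ∧ 1 ≤ (j:ℕ) then
        ((Real.sin (alphaAng nbar ((i:ℕ)-1)) * Real.sin (alphaAng nbar ((j:ℕ)-1)) : ℝ) : ℂ) *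
          ρ ⟨(i:ℕ)-1, by omega⟩ ⟨(j:ℕ)-1, by omega⟩
      else 0 := by
  simp only [Matrix.mul_apply, conjTranspose_apply, Mgr]
  simp only [apply_ite star, star_zero, Complex.star_def, Complex.conj_ofReal, mul_ite, mul_zero]
  rw [sum_shift]
  by_cases hj : 1 ≤ (j:ℕ)
  · rw [dif_pos hj]
    simp only [ite_mul, zero_mul]
    rw [sum_shift]
    by_cases hi : 1 ≤ (i:ℕ)
    · rw [dif_pos hi, dif_pos ⟨hi, hj⟩]
      push_cast
      ring
    · rw [dif_neg hi, dif_neg (by tauto)]; rw [zero_mul]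
  · rw [dif_neg hj, dif_neg (by tauto)]

lemma Me_entry (nbar : ℕ) (ρ : Matrix (Fin (nbar+1)) (Fin (nbar+1)) ℂ) (i j : Fin (nbar+1)) :
    (Mer nbar (nbar+1) * ρ * (Mer nbar (nbar+1))ᴴ) i j =
      ((Real.cos (alphaAng nbar (i:ℕ)) * Real.cos (alphaAng nbar (j:ℕ)) : ℝ) : ℂ) * ρ i j := by
  simp only [Matrix.mul_apply, conjTranspose_apply, Mer]
  simp only [apply_ite star, star_zero, Complex.star_def, Complex.conj_ofReal, mul_ite, mul_zero,
    ite_mul, zero_mul]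
  rw [Finset.sum_ite_eq Finset.univ j]
  simp only [Finset.mem_univ, if_true]
  rw [Finset.sum_ite_eq Finset.univ i]
  simp only [Finset.mem_univ, if_true]
  push_cast
  ring

lemma alpha_top (nbar : ℕ) : alphaAng nbar nbar = Real.pi := by
  unfold alphaAng
  rw [div_self (by positivity), Real.sqrt_one, mul_one]

lemma kraus_sum (nbar : ℕ) :
    (Mgr nbar (nbar+1))ᴴ * Mgr nbar (nbar+1) + (Mer nbar (nbar+1))ᴴ * Mer nbar (nbar+1) = 1 := by
  ext a b
  simp only [Matrix.add_apply, Matrix.mul_apply, conjTranspose_apply, Mgr, Mer, Matrix.one_apply,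
    apply_ite star, star_zero, Complex.star_def, Complex.conj_ofReal, ite_mul, zero_mul,
    mul_ite, mul_zero]
  have hg : (∑ k : Fin (nbar+1), if (k:ℕ) = (b:ℕ)+1 then
      (if (k:ℕ) = (a:ℕ)+1 then
        (Real.sin (alphaAng nbar (a:ℕ)) : ℂ) * (Real.sin (alphaAng nbar (b:ℕ)) : ℂ) else 0)
      else 0) =
      if a = b ∧ (a:ℕ)+1 < nbar+1 then ((Real.sin (alphaAng nbar (a:ℕ)))^2 : ℝ) else 0 := by
    by_cases h : a = b ∧ (a:ℕ)+1 < nbar+1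
    · obtain ⟨rfl, h2⟩ := h
      rw [if_pos ⟨rfl, h2⟩, Finset.sum_eq_single (⟨(a:ℕ)+1, h2⟩ : Fin (nbar+1))]
      · simp; push_cast; ring
      · intro k _ hk
        rw [if_neg]
        intro hc
        exact hk (Fin.ext hc)
      · simp
    · rw [if_neg h]
      apply Finset.sum_eq_zero
      intro k _
      split_ifs with h1 h2
      · exact absurd ⟨Fin.ext (by omega), by omega⟩ h
      · rfl
      · rfl
  rw [hg]
  have he : (∑ k : Fin (nbar+1), if k = b then
      (if k = a then
        (Real.cos (alphaAng nbar (a:ℕ)) : ℂ) * (Real.cos (alphaAng nbar (b:ℕ)) : ℂ) else 0)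
      else 0) =
      if a = b then ((Real.cos (alphaAng nbar (a:ℕ)))^2 : ℝ) else 0 := by
    rw [Finset.sum_ite_eq' Finset.univ b]
    simp only [Finset.mem_univ, if_true]
    by_cases h : a = b
    · subst h; simp; push_cast; ring
    · rw [if_neg (Ne.symm h), if_neg h]; norm_num
  rw [he]
  by_cases hab : a = b
  · subst hab
    rw [if_pos rfl, if_pos rfl]
    by_cases ha : (a:ℕ)+1 < nbar+1
    · rw [if_pos ⟨rfl, ha⟩]
      norm_cast
      rw [Real.sin_sq_add_cos_sq]
    · rw [if_neg (by tauto)]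
      have : (a:ℕ) = nbar := by omega
      rw [this, alpha_top]
      norm_num
  · rw [if_neg (by tauto), if_neg hab, if_neg hab]; norm_num

lemma Phir_psd {nbar : ℕ} {ρ : Matrix (Fin (nbar+1)) (Fin (nbar+1)) ℂ} (h : ρ.PosSemidef) :
    (PhirK nbar (nbar+1) ρ).PosSemidef :=
  (h.mul_mul_conjTranspose_same _).add (h.mul_mul_conjTranspose_same _)

lemma Phir_trace {nbar : ℕ} (ρ : Matrix (Fin (nbar+1)) (Fin (nbar+1)) ℂ) :
    (PhirK nbar (nbar+1) ρ).trace = ρ.trace := by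
  unfold PhirK
  rw [trace_add, Matrix.trace_mul_cycle _ _ ((Mgr nbar (nbar+1))ᴴ),
    Matrix.trace_mul_cycle _ _ ((Mer nbar (nbar+1))ᴴ), ← trace_add, ← Matrix.add_mul,
    kraus_sum, Matrix.one_mul]

lemma psd_diag {D : ℕ} {A : Matrix (Fin D) (Fin D) ℂ} (hA : A.PosSemidef) (a : Fin D) :
    0 ≤ (A a a).re ∧ A a a = ((A a a).re : ℂ) := by
  have := hA.dotProduct_mulVec_nonneg (Pi.single a 1)
  have h2 : star (Pi.single a 1) ⬝ᵥ A *ᵥ Pi.single a 1 = A a a := by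
    simp [dotProduct, mulVec, Pi.single_apply]
  rw [h2] at this
  rw [Complex.le_def] at this
  constructor
  · simpa using this.1
  · exact Complex.ext rfl (by simpa using this.2.symm)

lemma psd_entry_sq_le {D : ℕ} {A : Matrix (Fin D) (Fin D) ℂ} (hA : A.PosSemidef) (a b : Fin D) :
    ‖A a b‖^2 ≤ (A a a).re * (A b b).re := by
  open scoped MatrixOrder in
  obtain ⟨B, rfl⟩ := CStarAlgebra.nonneg_iff_eq_star_mul_self.mp hA.nonneg
  rw [star_eq_conjTranspose]
  set x : EuclideanSpace ℂ (Fin D) := WithLp.toLp 2 (fun k => B k a) with hx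
  set y : EuclideanSpace ℂ (Fin D) := WithLp.toLp 2 (fun k => B k b) with hy
  have hab : (Bᴴ*B) a b = inner ℂ x y := by
    simp [Matrix.mul_apply, conjTranspose_apply, PiLp.inner_apply, hx, hy, mul_comm]
  have haa : (Bᴴ*B) a a = inner ℂ x x := by
    simp [Matrix.mul_apply, conjTranspose_apply, PiLp.inner_apply, hx, mul_comm, -inner_self_eq_norm_sq_to_K]
  have hbb : (Bᴴ*B) b b = inner ℂ y y := by
    simp [Matrix.mul_apply, conjTranspose_apply, PiLp.inner_apply, hy, mul_comm, -inner_self_eq_norm_sq_to_K]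
  rw [hab, haa, hbb, sq]
  have h := inner_mul_inner_self_le (𝕜 := ℂ) x y
  have hsym : ‖(inner ℂ y x : ℂ)‖ = ‖(inner ℂ x y : ℂ)‖ := by
    rw [← inner_conj_symm x y, RCLike.norm_conj]
  rw [hsym] at h
  exact h

lemma alpha_pos (nbar n : ℕ) : 0 < alphaAng nbar n := by
  unfold alphaAng
  have : (0:ℝ) < ((n:ℝ)+1)/((nbar:ℝ)+1) := by positivity
  positivity

lemma alpha_lt_pi (nbar n : ℕ) (h : n < nbar) : alphaAng nbar n < Real.pi := by
  unfold alphaAng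
  have hr0 : (0:ℝ) ≤ ((n:ℝ)+1)/((nbar:ℝ)+1) := by positivity
  have hr1 : ((n:ℝ)+1)/((nbar:ℝ)+1) < 1 := by
    rw [div_lt_one (by positivity)]
    have : (n:ℝ) < nbar := by exact_mod_cast h
    linarith
  have hs : Real.sqrt (((n:ℝ)+1)/((nbar:ℝ)+1)) < 1 := by
    rw [Real.sqrt_lt' one_pos]
    simpa using hr1
  calc Real.pi * Real.sqrt (((n:ℝ)+1)/((nbar:ℝ)+1)) < Real.pi * 1 :=
        mul_lt_mul_of_pos_left hs Real.pi_pos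
    _ = Real.pi := mul_one _

lemma cos_sq_lt_one (nbar n : ℕ) (h : n < nbar) : (Real.cos (alphaAng nbar n))^2 < 1 := by
  have hs : 0 < Real.sin (alphaAng nbar n) :=
    Real.sin_pos_of_pos_of_lt_pi (alpha_pos nbar n) (alpha_lt_pi nbar n h)
  nlinarith [Real.sin_sq_add_cos_sq (alphaAng nbar n)]

lemma tendsto_zero_of_contract (x e : ℕ → ℝ) (c : ℝ) (hc0 : 0 ≤ c) (hc1 : c < 1)
    (hx : ∀ k, 0 ≤ x k) (hrec : ∀ k, x (k+1) ≤ c * x k + e k)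
    (he : Filter.Tendsto e Filter.atTop (nhds 0)) :
    Filter.Tendsto x Filter.atTop (nhds 0) := by
  rw [Metric.tendsto_atTop]
  intro ε hε
  have hε2 : 0 < (1-c)*ε/2 := by
    have : 0 < 1 - c := by linarith
    positivity
  obtain ⟨N, hN⟩ := (Metric.tendsto_atTop.mp he) ((1-c)*ε/2) hε2
  have key : ∀ m, x (N+m) ≤ c^m * x N + ε/2 := by
    intro m
    induction m with
    | zero => simp; linarith [hε]
    | succ m ih =>
      have h1 : x (N+m+1) ≤ c * x (N+m) + e (N+m) := hrec _
      have h2 : |e (N+m)| < (1-c)*ε/2 := by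
        simpa [Real.dist_eq] using hN (N+m) (by omega)
      have h3 : e (N+m) ≤ (1-c)*ε/2 := le_of_lt (lt_of_le_of_lt (le_abs_self _) h2)
      have h4 : c * x (N+m) ≤ c * (c^m * x N + ε/2) := mul_le_mul_of_nonneg_left ih hc0
      have : x (N+(m+1)) ≤ c * (c^m * x N + ε/2) + (1-c)*ε/2 := by
        calc x (N+(m+1)) = x (N+m+1) := by ring_nf
          _ ≤ c * x (N+m) + e (N+m) := h1
          _ ≤ c * (c^m * x N + ε/2) + (1-c)*ε/2 := by linarith
      calc x (N+(m+1)) ≤ c * (c^m * x N + ε/2) + (1-c)*ε/2 := this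
        _ = c^(m+1) * x N + (c*ε/2 + (1-c)*ε/2) := by ring
        _ = c^(m+1) * x N + ε/2 := by ring
  have hpow : Filter.Tendsto (fun m => c^m * x N) Filter.atTop (nhds 0) := by
    have := tendsto_pow_atTop_nhds_zero_of_lt_one hc0 hc1
    simpa using this.mul_const (x N)
  obtain ⟨M, hM⟩ := (Metric.tendsto_atTop.mp hpow) (ε/2) (by positivity)
  refine ⟨N+M, fun k hk => ?_⟩
  have hk' : k = N + (k - N) := by omega
  have hle : x k ≤ c^(k-N) * x N + ε/2 := by
    have h := key (k-N); rw [← hk'] at h; exact h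
  have hM' := hM (k-N) (by omega)
  rw [Real.dist_eq, sub_zero] at hM'
  have : c^(k-N) * x N < ε/2 := lt_of_le_of_lt (le_abs_self _) hM'
  rw [Real.dist_eq]
  rw [abs_of_nonneg (by linarith [hx k])]
  simp only [sub_zero]
  linarith [hx k]

/-- on the (n̄+1)-dimensional truncation, the resonant trapping-state
reservoir drives every density matrix entrywise to |n̄⟩⟨n̄|. -/
theorem trapping_state_convergence_below (nbar : ℕ)
    (ρ₀ : Matrix (Fin (nbar+1)) (Fin (nbar+1)) ℂ)
    (hpsd : ρ₀.PosSemidef) (htr : ρ₀.trace = 1) :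
    ∀ a b : Fin (nbar+1),
      Filter.Tendsto (fun k => (PhirK nbar (nbar+1))^[k] ρ₀ a b) Filter.atTop
        (nhds (Matrix.single (⟨nbar, by omega⟩ : Fin (nbar+1))
          (⟨nbar, by omega⟩ : Fin (nbar+1)) 1 a b)) := by
  set top : Fin (nbar+1) := ⟨nbar, by omega⟩ with htop
  set R : ℕ → Matrix (Fin (nbar+1)) (Fin (nbar+1)) ℂ :=
    fun k => (PhirK nbar (nbar+1))^[k] ρ₀ with hR
  have hRsucc : ∀ k, R (k+1) = PhirK nbar (nbar+1) (R k) := by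
    intro k
    simp only [hR, Function.iterate_succ_apply']
  have hpsdk : ∀ k, (R k).PosSemidef := by
    intro k
    induction k with
    | zero => exact hpsd
    | succ k ih => rw [hRsucc]; exact Phir_psd ih
  have htrk : ∀ k, (R k).trace = 1 := by
    intro k
    induction k with
    | zero => exact htr
    | succ k ih => rw [hRsucc, Phir_trace]; exact ih
  set d : ℕ → Fin (nbar+1) → ℝ := fun k n => ((R k) n n).re with hd
  have hd0 : ∀ k n, 0 ≤ d k n := fun k n => (psd_diag (hpsdk k) n).1
  have hdiag : ∀ k n, (R k) n n = ((d k n : ℝ) : ℂ) := fun k n => (psd_diag (hpsdk k) n).2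
  have hsum : ∀ k, ∑ n, d k n = 1 := by
    intro k
    have h := htrk k
    rw [Matrix.trace] at h
    have h2 : ∑ n, (R k) n n = ((∑ n, d k n : ℝ) : ℂ) := by
      push_cast
      exact Finset.sum_congr rfl (fun n _ => hdiag k n)
    rw [show (Matrix.diag (R k)) = fun n => (R k) n n from rfl] at h
    rw [h2] at h
    exact_mod_cast h
  have hd1 : ∀ k n, d k n ≤ 1 := by
    intro k n
    rw [← hsum k]
    exact Finset.single_le_sum (fun i _ => hd0 k i) (Finset.mem_univ n)
  have hrec : ∀ k (n : Fin (nbar+1)), d (k+1) n =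
      (Real.cos (alphaAng nbar (n:ℕ)))^2 * d k n +
      (if h : 1 ≤ (n:ℕ) then
        (Real.sin (alphaAng nbar ((n:ℕ)-1)))^2 * d k ⟨(n:ℕ)-1, by omega⟩ else 0) := by
    intro k n
    have : d (k+1) n = ((PhirK nbar (nbar+1) (R k)) n n).re := by
      show (R (k+1) n n).re = _
      rw [hRsucc k]
    rw [this, PhirK, Matrix.add_apply, Mg_entry, Me_entry, Complex.add_re]
    by_cases h : 1 ≤ (n:ℕ)
    · rw [dif_pos ⟨h, h⟩, dif_pos h, Complex.re_ofReal_mul, Complex.re_ofReal_mul]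
      simp only [hd]
      ring
    · rw [dif_neg (by tauto), dif_neg h, Complex.re_ofReal_mul]
      simp only [Complex.zero_re, hd]
      ring
  have hzero : ∀ n : Fin (nbar+1), (n:ℕ) < nbar →
      Filter.Tendsto (fun k => d k n) Filter.atTop (nhds 0) := by
    have H : ∀ m, ∀ n : Fin (nbar+1), (n:ℕ) = m → m < nbar →
        Filter.Tendsto (fun k => d k n) Filter.atTop (nhds 0) := by
      intro m
      induction m with
      | zero =>
        intro n hn hm
        apply tendsto_zero_of_contract _ (fun _ => 0) ((Real.cos (alphaAng nbar (n:ℕ)))^2)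
          (sq_nonneg _) (cos_sq_lt_one nbar (n:ℕ) (hn ▸ hm)) (hd0 · n)
        · intro k
          rw [hrec k n, dif_neg (by omega)]
        · exact tendsto_const_nhds
      | succ m ih =>
        intro n hn hm
        have hmn : m < nbar := by omega
        have hpred : Filter.Tendsto (fun k => d k ⟨m, by omega⟩) Filter.atTop (nhds 0) :=
          ih ⟨m, by omega⟩ rfl hmn
        apply tendsto_zero_of_contract _
          (fun k => (Real.sin (alphaAng nbar m))^2 * d k ⟨m, by omega⟩)
          ((Real.cos (alphaAng nbar (n:ℕ)))^2)
          (sq_nonneg _) (cos_sq_lt_one nbar (n:ℕ) (hn ▸ hm)) (hd0 · n)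
        · intro k
          rw [hrec k n, dif_pos (by omega)]
          have h1 : (n:ℕ) - 1 = m := by omega
          simp_rw [h1]
          exact le_refl _
        · simpa using hpred.const_mul ((Real.sin (alphaAng nbar m))^2)
    intro n hn
    exact H (n:ℕ) n rfl hn
  have htopone : Filter.Tendsto (fun k => d k top) Filter.atTop (nhds 1) := by
    have heq : ∀ k, d k top = 1 - ∑ n ∈ Finset.univ.erase top, d k n := by
      intro k
      have := hsum k
      rw [← Finset.add_sum_erase Finset.univ _ (Finset.mem_univ top)] at this
      linarith
    have hsum0 : Filter.Tendsto (fun k => ∑ n ∈ Finset.univ.erase top, d k n)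
        Filter.atTop (nhds 0) := by
      have : ∀ n ∈ Finset.univ.erase top,
          Filter.Tendsto (fun k => d k n) Filter.atTop (nhds 0) := by
        intro n hn
        apply hzero
        have := Finset.ne_of_mem_erase hn
        have : (n:ℕ) ≠ nbar := fun hc => this (Fin.ext hc)
        omega
      have h := tendsto_finset_sum (Finset.univ.erase top) this
      simpa using h
    have := hsum0.const_sub 1
    simp only [sub_zero] at this
    exact Filter.Tendsto.congr (fun k => (heq k).symm) this
  intro a b
  by_cases hab : a = top ∧ b = top
  · obtain ⟨rfl, rfl⟩ := hab
    have : Matrix.single top top (1:ℂ) top top = 1 := by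
      simp [Matrix.single]
    rw [this]
    have h1 : Filter.Tendsto (fun k => ((d k top : ℝ) : ℂ)) Filter.atTop (nhds ((1:ℝ):ℂ)) :=
      (Complex.continuous_ofReal.tendsto 1).comp htopone
    simp only [Complex.ofReal_one] at h1
    exact Filter.Tendsto.congr (fun k => (hdiag k top).symm) h1
  · have hstd : Matrix.single top top (1:ℂ) a b = 0 := by
      simp only [Matrix.single]
      rw [Matrix.of_apply, if_neg]
      tauto
    rw [hstd]
    -- one of a, b is below nbar
    have hm : ∃ m : Fin (nbar+1), (m:ℕ) < nbar ∧ ∀ k, ‖(R k) a b‖^2 ≤ d k m := by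
      rcases not_and_or.mp hab with h | h
      · refine ⟨a, ?_, ?_⟩
        · have : (a:ℕ) ≠ nbar := fun hc => h (Fin.ext hc)
          omega
        · intro k
          calc ‖(R k) a b‖^2 ≤ d k a * d k b := psd_entry_sq_le (hpsdk k) a b
            _ ≤ d k a * 1 := mul_le_mul_of_nonneg_left (hd1 k b) (hd0 k a)
            _ = d k a := mul_one _
      · refine ⟨b, ?_, ?_⟩
        · have : (b:ℕ) ≠ nbar := fun hc => h (Fin.ext hc)
          omega
        · intro k
          calc ‖(R k) a b‖^2 ≤ d k a * d k b := psd_entry_sq_le (hpsdk k) a b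
            _ ≤ 1 * d k b := mul_le_mul_of_nonneg_right (hd1 k a) (hd0 k b)
            _ = d k b := one_mul _
    obtain ⟨m, hmlt, hmb⟩ := hm
    have hsq : Filter.Tendsto (fun k => ‖(R k) a b‖^2) Filter.atTop (nhds 0) := by
      apply tendsto_of_tendsto_of_tendsto_of_le_of_le tendsto_const_nhds (hzero m hmlt)
      · intro k; positivity
      · exact hmb
    have hnorm : Filter.Tendsto (fun k => ‖(R k) a b‖) Filter.atTop (nhds 0) := by
      have h := (Real.continuous_sqrt.tendsto 0).comp hsq
      simp only [Real.sqrt_zero] at h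
      apply Filter.Tendsto.congr _ h
      intro k
      simp only [Function.comp_apply]
      rw [Real.sqrt_sq (norm_nonneg _)]
    rw [← tendsto_zero_iff_norm_tendsto_zero] at hnorm
    exact hnorm
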